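/- arXiv:1504.03552 — 2 statements merged into one kernel-verified Lean document; each statement's English description precedes it below -/
import Mathlib

section
/- Let $(\Omega,\mathcal G,Q)$ be a probability space, $\mathcal F_t \subseteq \mathcal G_t \subseteq \mathcal G$ sub-$\sigma$-algebras, and $\tau$ a random time such that $\{\tau > t\}$ is $\mathcal G_t$-measurable. Then for any integrable $\mathcal G$-measurable random variable $Y$, almost surely $E^Q[\mathbf 1_{\{\tau>t\}} Y \mid \mathcal G_t] \cdot Q(\tau>t \mid \mathcal F_t) = Q(\tau>t\mid\mathcal G_t) \cdot E^Q[\mathbf 1_{\{\tau>t\}} Y \mid \mathcal F_t]$ on the event $\{\tau > t\}$, provided $\mathcal G_t = \mathcal F_t \vee \sigma(\mathbf 1_{\{\tau \le s\}} : s \le t)$. -/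
open MeasureTheory

/-- Every `Gt`-measurable set agrees on `A` with an `Ft`-measurable set. -/
lemma key_lemma_aux {Ω : Type*} (Ft Gt : MeasurableSpace Ω)
    (τ : Ω → ℝ) (t : ℝ)
    (hGen : Gt = Ft ⊔ MeasurableSpace.generateFrom {A | ∃ s ≤ t, A = {ω | τ ω ≤ s}}) :
    ∀ B, MeasurableSet[Gt] B → ∃ C, MeasurableSet[Ft] C ∧
      B ∩ {ω | t < τ ω} = C ∩ {ω | t < τ ω} := by
  set A := {ω | t < τ ω}
  let D : MeasurableSpace Ω :=
  { MeasurableSet' := fun B => ∃ C, MeasurableSet[Ft] C ∧ B ∩ A = C ∩ A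
    measurableSet_empty := ⟨∅, @MeasurableSet.empty Ω Ft, rfl⟩
    measurableSet_compl := by
      rintro B ⟨C, hC, hBC⟩
      refine ⟨Cᶜ, hC.compl, ?_⟩
      ext ω
      simp only [Set.mem_inter_iff, Set.mem_compl_iff]
      constructor
      · rintro ⟨hB, hA⟩
        refine ⟨fun hCω => hB ?_, hA⟩
        have : ω ∈ C ∩ A := ⟨hCω, hA⟩
        rw [← hBC] at this; exact this.1
      · rintro ⟨hCc, hA⟩
        refine ⟨fun hBω => hCc ?_, hA⟩
        have : ω ∈ B ∩ A := ⟨hBω, hA⟩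
        rw [hBC] at this; exact this.1
    measurableSet_iUnion := by
      intro f hf
      choose C hC hfC using hf
      exact ⟨⋃ i, C i, MeasurableSet.iUnion hC, by
        simp only [Set.iUnion_inter]
        exact Set.iUnion_congr hfC⟩ }
  have hle : Gt ≤ D := by
    rw [hGen]
    refine sup_le (fun B hB => ⟨B, hB, rfl⟩) (MeasurableSpace.generateFrom_le ?_)
    rintro B ⟨s, hs, rfl⟩
    refine ⟨∅, @MeasurableSet.empty Ω Ft, ?_⟩
    ext ω
    simp only [Set.mem_inter_iff, Set.mem_setOf_eq, Set.empty_inter, Set.mem_empty_iff_false,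
      iff_false, not_and, A]
    intro h1 h2
    exact absurd (h1.trans hs) (not_le.2 h2)
  exact fun B hB => hle B hB

/-- The "key lemma" of credit risk theory. -/
theorem key_lemma {Ω : Type*} [m : MeasurableSpace Ω] (Q : Measure Ω) [IsProbabilityMeasure Q]
    (Ft Gt : MeasurableSpace Ω) (hFG : Ft ≤ Gt) (hG : Gt ≤ m)
    (τ : Ω → ℝ) (t : ℝ)
    (hτGt : MeasurableSet[Gt] {ω | t < τ ω})
    (hGen : Gt = Ft ⊔ MeasurableSpace.generateFrom {A | ∃ s ≤ t, A = {ω | τ ω ≤ s}})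
    (Y : Ω → ℝ) (hY : Integrable Y Q) :
    ∀ᵐ ω ∂Q, t < τ ω →
      (Q[Set.indicator {ω' | t < τ ω'} Y | Gt]) ω
          * (Q[Set.indicator {ω' | t < τ ω'} (fun _ => (1 : ℝ)) | Ft]) ω
        = (Q[Set.indicator {ω' | t < τ ω'} (fun _ => (1 : ℝ)) | Gt]) ω
          * (Q[Set.indicator {ω' | t < τ ω'} Y | Ft]) ω := by
  letI : MeasurableSpace Ω := m
  have hF : Ft ≤ m := hFG.trans hG
  set A := {ω' | t < τ ω'} with hA
  have hAm : MeasurableSet[m] A := hG _ hτGt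
  haveI : SigmaFinite (Q.trim hG) := by
    haveI : IsFiniteMeasure (Q.trim hG) := isFiniteMeasure_trim hG
    infer_instance
  haveI : SigmaFinite (Q.trim hF) := by
    haveI : IsFiniteMeasure (Q.trim hF) := isFiniteMeasure_trim hF
    infer_instance
  set φ : Ω → ℝ := A.indicator Y with hφ
  set ψ : Ω → ℝ := A.indicator (fun _ => (1:ℝ)) with hψ
  have hφ_int : Integrable φ Q := Integrable.indicator (μ := Q) hY hAm
  have hψ_int : Integrable ψ Q := Integrable.indicator (μ := Q) (integrable_const (1:ℝ)) hAm
  have hψ_bd : ∀ᵐ ω ∂Q, ‖ψ ω‖ ≤ 1 := by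
    refine Filter.Eventually.of_forall fun ω => ?_
    by_cases h : ω ∈ A <;>
      simp [hψ, Set.indicator_of_mem, Set.indicator_of_notMem, h]
  set f := Q[φ|Gt] with hf
  set g := Q[φ|Ft] with hg
  set N := Q[ψ|Ft] with hN
  -- N is bounded by 1 a.e.
  have hN_bd : ∀ᵐ ω ∂Q, ‖N ω‖ ≤ 1 := by
    have h0 : 0 ≤ᵐ[Q] N := condExp_nonneg (Filter.Eventually.of_forall fun ω =>
      Set.indicator_nonneg (fun _ _ => zero_le_one) ω)
    have h1 : N ≤ᵐ[Q] Q[(fun _ => (1:ℝ))|Ft] := by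
      refine condExp_mono hψ_int (integrable_const 1)
        (Filter.Eventually.of_forall fun ω => ?_)
      by_cases h : ω ∈ A <;>
        simp [hψ, Set.indicator_of_mem, Set.indicator_of_notMem, h]
    have hc : Q[(fun _ => (1:ℝ))|Ft] = fun _ => (1:ℝ) := condExp_const hF 1
    rw [hc] at h1
    filter_upwards [h0, h1] with ω h0ω h1ω
    rw [Real.norm_eq_abs, abs_le]
    have h0' : (0:ℝ) ≤ N ω := h0ω
    constructor
    · linarith
    · exact h1ω
  have hN_sm : StronglyMeasurable[Ft] N := stronglyMeasurable_condExp
  have hf_sm : StronglyMeasurable[Gt] f := stronglyMeasurable_condExp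
  have hg_sm : StronglyMeasurable[Ft] g := stronglyMeasurable_condExp
  have hNf_int : Integrable (fun ω => N ω * f ω) Q :=
    integrable_condExp.bdd_mul ((hN_sm.mono hF).aestronglyMeasurable) hN_bd
  have hfN_int : Integrable (fun ω => f ω * N ω) Q := by
    simpa [mul_comm] using hNf_int
  have hNφ_int : Integrable (fun ω => N ω * φ ω) Q :=
    hφ_int.bdd_mul ((hN_sm.mono hF).aestronglyMeasurable) hN_bd
  have hg_int : Integrable g Q := integrable_condExp
  -- pull-out properties
  have hpullG : Q[fun ω => N ω * φ ω|Gt] =ᵐ[Q] fun ω => N ω * f ω :=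
    condExp_mul_of_stronglyMeasurable_left (μ := Q) (m := Gt) (hN_sm.mono hFG) hNφ_int hφ_int
  have hpullF : Q[fun ω => N ω * φ ω|Ft] =ᵐ[Q] fun ω => N ω * g ω :=
    condExp_mul_of_stronglyMeasurable_left (μ := Q) (m := Ft) hN_sm hNφ_int hφ_int
  -- 1_A * f =ᵐ f
  have hfA : A.indicator f =ᵐ[Q] f := by
    have h1 : Q[A.indicator φ|Gt] =ᵐ[Q] A.indicator f := condExp_indicator hφ_int hτGt
    have h2 : A.indicator φ = φ := by
      simp [hφ, Set.indicator_indicator]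
    rw [h2] at h1
    exact h1.symm
  -- main a.e. equality: A.indicator (f * N) =ᵐ A.indicator g
  have hmain : A.indicator (fun ω => f ω * N ω) =ᵐ[Q] A.indicator g := by
    refine ae_eq_of_forall_setIntegral_eq_of_sigmaFinite' hG
      (fun s _ _ => (Integrable.indicator (μ := Q) hfN_int hAm).integrableOn)
      (fun s _ _ => (Integrable.indicator (μ := Q) hg_int hAm).integrableOn)
      ?_ ?_ ?_
    · intro B hB _
      obtain ⟨C, hC, hBC⟩ := key_lemma_aux Ft Gt τ t hGen B hB
      have hCm : MeasurableSet[m] C := hF _ hC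
      rw [setIntegral_indicator hAm, setIntegral_indicator hAm, hBC]
      have lhs1 : ∫ ω in C ∩ A, f ω * N ω ∂Q
          = ∫ ω in C, A.indicator (fun ω => f ω * N ω) ω ∂Q := by
        rw [setIntegral_indicator hAm]
      have indAe : A.indicator (fun ω => f ω * N ω) =ᵐ[Q] fun ω => f ω * N ω := by
        filter_upwards [hfA] with ω hω
        by_cases hωA : ω ∈ A
        · rw [Set.indicator_of_mem hωA]
        · rw [Set.indicator_of_notMem hωA]
          have h0 : A.indicator f ω = 0 := Set.indicator_of_notMem hωA f
          rw [hω] at h0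
          rw [h0, zero_mul]
      have lhs2 : ∫ ω in C, A.indicator (fun ω => f ω * N ω) ω ∂Q = ∫ ω in C, f ω * N ω ∂Q :=
        setIntegral_congr_ae hCm (indAe.mono fun ω h _ => h)
      have lhs3 : ∫ ω in C, f ω * N ω ∂Q = ∫ ω in C, N ω * φ ω ∂Q := by
        have h1 : ∫ ω in C, f ω * N ω ∂Q = ∫ ω in C, N ω * f ω ∂Q := by
          simp_rw [mul_comm]
        rw [h1, ← setIntegral_congr_ae (hG _ (hFG _ hC)) (hpullG.mono fun ω h _ => h),
          setIntegral_condExp hG hNφ_int (hFG _ hC)]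
      have rhs1 : ∫ ω in C, N ω * φ ω ∂Q = ∫ ω in C, N ω * g ω ∂Q := by
        rw [← setIntegral_condExp hF hNφ_int hC]
        exact setIntegral_congr_ae (hF _ hC) (hpullF.mono fun ω h _ => h)
      have rhs2 : ∫ ω in C ∩ A, g ω ∂Q = ∫ ω in C, N ω * g ω ∂Q := by
        have hCg_sm : StronglyMeasurable[Ft] (fun ω => C.indicator g ω) := hg_sm.indicator hC
        have hCg_int : Integrable (fun ω => C.indicator g ω) Q := Integrable.indicator (μ := Q) hg_int hCm
        have hint : Integrable (fun ω => C.indicator g ω * ψ ω) Q := by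
          have := hCg_int.bdd_mul (hψ_int.1) hψ_bd
          simpa [mul_comm] using this
        have hpull : Q[fun ω => C.indicator g ω * ψ ω|Ft] =ᵐ[Q]
            fun ω => C.indicator g ω * N ω := condExp_mul_of_stronglyMeasurable_left hCg_sm hint hψ_int
        have e1 : ∫ ω in C ∩ A, g ω ∂Q = ∫ ω, C.indicator g ω * ψ ω ∂Q := by
          rw [← integral_indicator (hCm.inter hAm)]
          congr 1
          funext ω
          by_cases h1 : ω ∈ C <;> by_cases h2 : ω ∈ A <;>
            simp [hψ, Set.indicator_of_mem, Set.indicator_of_notMem, h1, h2,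
              Set.mem_inter_iff]
        have e2 : ∫ ω, C.indicator g ω * ψ ω ∂Q = ∫ ω, C.indicator g ω * N ω ∂Q := by
          have hic := integral_condExp (μ := Q) hF (f := fun ω => C.indicator g ω * ψ ω)
          rw [← hic]
          exact integral_congr_ae hpull
        have e3 : ∫ ω, C.indicator g ω * N ω ∂Q = ∫ ω in C, N ω * g ω ∂Q := by
          rw [← integral_indicator hCm]
          congr 1
          funext ω
          by_cases h1 : ω ∈ C <;>
            simp [Set.indicator_of_mem, Set.indicator_of_notMem, h1, mul_comm]
        rw [e1, e2, e3]
      rw [lhs1, lhs2, lhs3, rhs1, ← rhs2]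
    · exact ((hf_sm.mul (hN_sm.mono hFG)).indicator hτGt).aestronglyMeasurable
    · exact ((hg_sm.mono hFG).indicator hτGt).aestronglyMeasurable
  -- Q[ψ|Gt] = ψ
  have hh : Q[ψ|Gt] = ψ :=
    condExp_of_stronglyMeasurable hG (stronglyMeasurable_const.indicator hτGt) hψ_int
  filter_upwards [hmain] with ω hω hωA
  have hmem : ω ∈ A := hωA
  have h1 : A.indicator (fun ω => f ω * N ω) ω = f ω * N ω :=
    Set.indicator_of_mem hmem _
  have h2 : A.indicator g ω = g ω := Set.indicator_of_mem hmem _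
  have h3 : ψ ω = 1 := Set.indicator_of_mem hmem _
  show f ω * N ω = (Q[ψ|Gt]) ω * g ω
  rw [hh, h3, one_mul]
  rw [h1, h2] at hω
  exact hω
end

section
/- Let $\mathcal N$ denote the standard normal CDF, $c_1 > 0$, $\lambda > 0$ with $c_1^2 > 2\lambda$, and $t < T$. Then $\lambda e^{\lambda t}\int_t^T \mathcal N(c_1\sqrt{T-u}) e^{-\lambda u}\, du = \mathcal N(c_1\sqrt{T-t}) - \frac{c_1 e^{-\lambda(T-t)}}{\sqrt{c_1^2 - 2\lambda}}\mathcal N\big(\sqrt{(c_1^2 - 2\lambda)(T-t)}\big) + \frac{e^{-\lambda(T-t)}}{2}\Big(\frac{c_1}{\sqrt{c_1^2 - 2\lambda}} - 1\Big).$ -/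
open Real MeasureTheory Set

/-- The standard normal cumulative distribution function. -/
noncomputable def stdNormalCDF (x : ℝ) : ℝ :=
  ∫ z in Set.Iic x, Real.exp (-z ^ 2 / 2) / Real.sqrt (2 * Real.pi)

lemma phi_eq (z : ℝ) : Real.exp (-z ^ 2 / 2) / Real.sqrt (2 * Real.pi)
    = Real.exp (-(1/2) * z ^ 2) * (Real.sqrt (2 * Real.pi))⁻¹ := by
  rw [div_eq_mul_inv]; ring_nf

lemma phi_integrable : Integrable (fun z : ℝ => Real.exp (-z ^ 2 / 2) / Real.sqrt (2 * Real.pi)) := by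
  simp_rw [phi_eq]
  exact (integrable_exp_neg_mul_sq (by norm_num : (0:ℝ) < 1/2)).mul_const _

lemma phi_continuous : Continuous (fun z : ℝ => Real.exp (-z ^ 2 / 2) / Real.sqrt (2 * Real.pi)) := by
  fun_prop

lemma stdNormalCDF_eq (x : ℝ) : stdNormalCDF x
    = stdNormalCDF 0 + ∫ z in (0:ℝ)..x, Real.exp (-z ^ 2 / 2) / Real.sqrt (2 * Real.pi) := by
  rw [← intervalIntegral.integral_Iic_sub_Iic phi_integrable.integrableOn phi_integrable.integrableOn]
  unfold stdNormalCDF; ring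

lemma hasDerivAt_stdNormalCDF (x : ℝ) :
    HasDerivAt stdNormalCDF (Real.exp (-x ^ 2 / 2) / Real.sqrt (2 * Real.pi)) x := by
  have h : HasDerivAt (fun y => ∫ z in (0:ℝ)..y, Real.exp (-z ^ 2 / 2) / Real.sqrt (2 * Real.pi))
      (Real.exp (-x ^ 2 / 2) / Real.sqrt (2 * Real.pi)) x :=
    intervalIntegral.integral_hasDerivAt_right ((phi_integrable.intervalIntegrable (a := 0) (b := x)))
      (phi_continuous.stronglyMeasurableAtFilter _ _) phi_continuous.continuousAt
  have h2 := h.const_add (stdNormalCDF 0)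
  have heq : (fun y => stdNormalCDF 0 + ∫ z in (0:ℝ)..y, Real.exp (-z ^ 2 / 2) / Real.sqrt (2 * Real.pi)) = stdNormalCDF := by
    funext y; exact (stdNormalCDF_eq y).symm
  rwa [heq] at h2

lemma stdNormalCDF_zero : stdNormalCDF 0 = 1 / 2 := by
  have heven : (∫ z in Iic (0:ℝ), Real.exp (-z ^ 2 / 2) / Real.sqrt (2 * Real.pi))
      = ∫ z in Ioi (0:ℝ), Real.exp (-z ^ 2 / 2) / Real.sqrt (2 * Real.pi) := by
    have := integral_comp_neg_Iic (0:ℝ) (fun z => Real.exp (-z ^ 2 / 2) / Real.sqrt (2 * Real.pi))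
    simp only [neg_zero] at this
    rw [← this]
    apply setIntegral_congr_fun measurableSet_Iic
    intro z _
    simp [neg_pow]
  have htot : (∫ z : ℝ, Real.exp (-z ^ 2 / 2) / Real.sqrt (2 * Real.pi)) = 1 := by
    simp_rw [phi_eq]
    rw [MeasureTheory.integral_mul_const, integral_gaussian]
    rw [mul_inv_eq_one₀ (by positivity)]
    rw [show Real.pi / (1/2) = 2 * Real.pi by ring]
  have hsum := intervalIntegral.integral_Iic_add_Ioi (b := (0:ℝ))
    phi_integrable.integrableOn phi_integrable.integrableOn
  rw [htot, ← heven] at hsum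
  unfold stdNormalCDF
  linarith

lemma stdNormalCDF_continuous : Continuous stdNormalCDF :=
  continuous_iff_continuousAt.2 fun x => (hasDerivAt_stdNormalCDF x).continuousAt

/-- Explicit value of `A₁(t,T)` in the case `c₁² > 2λ`. -/
theorem A1_case_gt (c₁ l t T : ℝ) (hc₁ : 0 < c₁) (hl : 0 < l)
    (hcase : 2 * l < c₁ ^ 2) (htT : t < T) :
    l * Real.exp (l * t) *
        ∫ u in t..T, stdNormalCDF (c₁ * Real.sqrt (T - u)) * Real.exp (-l * u)
      = stdNormalCDF (c₁ * Real.sqrt (T - t))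
        - c₁ * Real.exp (-l * (T - t)) / Real.sqrt (c₁ ^ 2 - 2 * l)
            * stdNormalCDF (Real.sqrt ((c₁ ^ 2 - 2 * l) * (T - t)))
        + Real.exp (-l * (T - t)) / 2 * (c₁ / Real.sqrt (c₁ ^ 2 - 2 * l) - 1) := by
  set a : ℝ := Real.sqrt (c₁ ^ 2 - 2 * l) with ha_def
  have hpos : (0:ℝ) < c₁ ^ 2 - 2 * l := by linarith
  have ha : 0 < a := Real.sqrt_pos.2 hpos
  have ha2 : a ^ 2 = c₁ ^ 2 - 2 * l := Real.sq_sqrt hpos.le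
  set H : ℝ → ℝ := fun u =>
    (Real.exp (-l * u) * stdNormalCDF (c₁ * Real.sqrt (T - u))) * (-(1/l))
      + (c₁ * Real.exp (-l * T) / (l * a)) * stdNormalCDF (a * Real.sqrt (T - u)) with hH_def
  have hcontH : Continuous H := by
    apply Continuous.add
    · exact (((Real.continuous_exp.comp (continuous_const.mul continuous_id)).mul
        (stdNormalCDF_continuous.comp (continuous_const.mul (continuous_const.sub continuous_id).sqrt : Continuous fun u:ℝ => c₁ * Real.sqrt (T-u)))).mul
        continuous_const)
    · exact continuous_const.mul
        (stdNormalCDF_continuous.comp (continuous_const.mul (continuous_const.sub continuous_id).sqrt : Continuous fun u:ℝ => a * Real.sqrt (T-u)))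
  have hderiv : ∀ u ∈ Ioo t T,
      HasDerivWithinAt H (stdNormalCDF (c₁ * Real.sqrt (T - u)) * Real.exp (-l * u)) (Ioi u) u := by
    intro u hu
    have hs : (0:ℝ) < T - u := by simp only [mem_Ioo] at hu; linarith
    have hsqrt : HasDerivAt (fun u => Real.sqrt (T - u)) (1 / (2 * Real.sqrt (T - u)) * (-1)) u :=
      (Real.hasDerivAt_sqrt hs.ne').comp u ((hasDerivAt_id u).const_sub T)
    have hN : ∀ c : ℝ, HasDerivAt (fun u => stdNormalCDF (c * Real.sqrt (T - u)))
        ((Real.exp (-(c * Real.sqrt (T - u)) ^ 2 / 2) / Real.sqrt (2 * Real.pi))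
          * (c * (1 / (2 * Real.sqrt (T - u)) * (-1)))) u := by
      intro c
      exact (hasDerivAt_stdNormalCDF _).comp u (hsqrt.const_mul c)
    have hE : HasDerivAt (fun u => Real.exp (-l * u)) (Real.exp (-l * u) * (-l)) u := by
      simpa using (((hasDerivAt_id u).const_mul (-l)).exp)
    have hD := ((hE.mul (hN c₁)).mul_const (-(1/l))).add ((hN a).const_mul
      (c₁ * Real.exp (-l * T) / (l * a)))
    have heq : (Real.exp (-l * u) * (-l) * stdNormalCDF (c₁ * Real.sqrt (T - u)) +
          Real.exp (-l * u) * ((Real.exp (-(c₁ * Real.sqrt (T - u)) ^ 2 / 2) / Real.sqrt (2 * Real.pi))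
            * (c₁ * (1 / (2 * Real.sqrt (T - u)) * (-1))))) * (-(1/l))
        + (c₁ * Real.exp (-l * T) / (l * a)) *
          ((Real.exp (-(a * Real.sqrt (T - u)) ^ 2 / 2) / Real.sqrt (2 * Real.pi))
            * (a * (1 / (2 * Real.sqrt (T - u)) * (-1))))
        = stdNormalCDF (c₁ * Real.sqrt (T - u)) * Real.exp (-l * u) := by
      have hsq : ∀ c : ℝ, (c * Real.sqrt (T - u)) ^ 2 = c ^ 2 * (T - u) := by
        intro c; rw [mul_pow, Real.sq_sqrt hs.le]
      rw [hsq, hsq, ha2]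
      have hexp : Real.exp (-(l * u)) * Real.exp (-(c₁ ^ 2 * (T - u)) / 2)
          = Real.exp (-(l * T)) * Real.exp (-((c₁ ^ 2 - 2 * l) * (T - u)) / 2) := by
        rw [← Real.exp_add, ← Real.exp_add]; ring_nf
      have hss : Real.sqrt (T - u) ≠ 0 := (Real.sqrt_pos.2 hs).ne'
      have hpi : Real.sqrt (2 * Real.pi) ≠ 0 := by positivity
      field_simp
      linear_combination c₁ * (by rw [← Real.exp_add, ← Real.exp_add]; ring_nf : Real.exp (-(l * u)) * Real.exp (-(c₁ ^ 2 * (T - u) / 2)) = Real.exp (-(l * T)) * Real.exp (-((T - u) * (c₁ ^ 2 - l * 2) / 2)))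
    rw [heq] at hD
    exact hD.hasDerivWithinAt
  have hint : IntervalIntegrable
      (fun u => stdNormalCDF (c₁ * Real.sqrt (T - u)) * Real.exp (-l * u)) volume t T := by
    apply Continuous.intervalIntegrable
    exact (stdNormalCDF_continuous.comp
      (continuous_const.mul (continuous_const.sub continuous_id).sqrt : Continuous fun u:ℝ => c₁ * Real.sqrt (T-u))).mul
      (Real.continuous_exp.comp (continuous_const.mul continuous_id))
  have hFTC := intervalIntegral.integral_eq_sub_of_hasDeriv_right_of_le htT.le
    hcontH.continuousOn hderiv hint
  rw [hFTC]
  have hT0 : Real.sqrt (T - T) = 0 := by simp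
  have hsplit : Real.sqrt ((c₁ ^ 2 - 2 * l) * (T - t)) = a * Real.sqrt (T - t) := by
    rw [Real.sqrt_mul hpos.le]
  rw [hsplit]
  simp only [hH_def, hT0, mul_zero, stdNormalCDF_zero]
  have hexp2 : Real.exp (-l * (T - t)) = Real.exp (-l * T) * Real.exp (l * t) := by
    rw [← Real.exp_add]; ring_nf
  have hexp3 : Real.exp (-(l * t)) * Real.exp (l * t) = 1 := by
    rw [← Real.exp_add, show -(l * t) + l * t = 0 by ring, Real.exp_zero]
  rw [hexp2]
  field_simp
  linear_combination (2 * a * stdNormalCDF (c₁ * Real.sqrt (T - t))) * hexp3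
end
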